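/- If G is a finite simple graph of order n(G) and t ≥ 2 is an integer, then ι(S_G^t) ≤ ξ(S_G²)·n(G)^{t−2}, where S_G^t is the t-th generalized Sierpiński graph of base G and ξ(S_G²) is the minimum cardinality of an isolating set D of S_G² with |D| ≤ γ(S_G²) such that there is no edge ij of G with both extreme vertices ii and jj lying outside N[D]. -/

import Mathlib

/-- The closed neighborhood `N[A]` of a set of vertices. -/
def closedNbhd {V : Type*} (G : SimpleGraph V) (A : Set V) : Set V :=
  {v | v ∈ A ∨ ∃ a ∈ A, G.Adj a v}

/-- A set of vertices is independent if it contains no edge. -/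
def IndepSet {V : Type*} (G : SimpleGraph V) (S : Set V) : Prop :=
  ∀ u ∈ S, ∀ v ∈ S, ¬ G.Adj u v

/-- `A` is isolating if the vertices outside `N[A]` form an independent set. -/
def IsIsolating {V : Type*} (G : SimpleGraph V) (A : Set V) : Prop :=
  IndepSet G (closedNbhd G A)ᶜ

/-- The isolation number `ι(G)`. -/
noncomputable def isolationNum {V : Type*} (G : SimpleGraph V) : ℕ :=
  sInf {n | ∃ A : Set V, IsIsolating G A ∧ A.ncard = n}

/-- `D` is a dominating set if `N[D] = V(G)`. -/
def IsDominating {V : Type*} (G : SimpleGraph V) (D : Set V) : Prop :=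
  closedNbhd G D = Set.univ

/-- The domination number `γ(G)`. -/
noncomputable def dominationNum {V : Type*} (G : SimpleGraph V) : ℕ :=
  sInf {n | ∃ D : Set V, IsDominating G D ∧ D.ncard = n}
/-- The generalized Sierpiński graph `S_G^t` on words of length `t` over `V(G)`. -/
def sierpinskiGraph {V : Type*} (G : SimpleGraph V) (t : ℕ) : SimpleGraph (Fin t → V) where
  Adj u v := ∃ i : Fin t, (∀ j, j < i → u j = v j) ∧ u i ≠ v i ∧ G.Adj (u i) (v i) ∧
      ∀ j, i < j → u j = v i ∧ v j = u i
  symm := by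
    constructor
    rintro u v ⟨i, h1, h2, h3, h4⟩
    exact ⟨i, fun j hj => (h1 j hj).symm, h2.symm, h3.symm,
      fun j hj => ⟨(h4 j hj).2, (h4 j hj).1⟩⟩
  loopless := by
    constructor
    rintro u ⟨i, -, h2, -, -⟩
    exact h2 rfl

/-- The extreme vertices of `S_G^t`: the constant words. -/
def extremeVertices (V : Type*) (t : ℕ) : Set (Fin t → V) :=
  {w | ∃ x : V, w = fun _ => x}
/-- `ξ(S_G²)`: the minimum size of an isolating set `D` of `S_G²` of size at most
`γ(S_G²)` such that no two extreme vertices `ii`, `jj` with `ij ∈ E(G)` both lie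
outside `N[D]`. -/
noncomputable def xiNum {V : Type*} (G : SimpleGraph V) : ℕ :=
  sInf {n | ∃ D : Set (Fin 2 → V), IsIsolating (sierpinskiGraph G 2) D ∧
      D.ncard ≤ dominationNum (sierpinskiGraph G 2) ∧
      (∀ i j : V, ((fun _ => i) : Fin 2 → V) ∉ closedNbhd (sierpinskiGraph G 2) D →
        ((fun _ => j) : Fin 2 → V) ∉ closedNbhd (sierpinskiGraph G 2) D → ¬ G.Adj i j) ∧
      D.ncard = n}

/-- suffix of length 2 -/
def suffW {V : Type*} (m : ℕ) (u : Fin (m+2) → V) : Fin 2 → V :=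
  fun k => u ⟨m + k, by omega⟩

/-- glue a prefix and a pair -/
def glueW {V : Type*} (m : ℕ) (p : Fin m → V) (d : Fin 2 → V) : Fin (m+2) → V :=
  fun j => if h : (j : ℕ) < m then p ⟨j, h⟩ else d ⟨(j : ℕ) - m, by omega⟩

lemma suff_glue {V : Type*} (m : ℕ) (p : Fin m → V) (d : Fin 2 → V) :
    suffW m (glueW m p d) = d := by
  funext k
  have h : ¬ (m + (k : ℕ) < m) := by omega
  simp only [suffW, glueW, dif_neg h]
  exact congrArg d (Fin.ext (by simp only [Fin.val_mk]; omega))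

lemma glue_suff {V : Type*} (m : ℕ) (u : Fin (m+2) → V) :
    glueW m (fun j => u ⟨(j : ℕ), by omega⟩) (suffW m u) = u := by
  funext j
  by_cases h : (j : ℕ) < m
  · simp only [glueW, dif_pos h]
  · simp only [glueW, dif_neg h, suffW]
    exact congrArg u (Fin.ext (by simp only [Fin.val_mk]; omega))

lemma adj_lift {V : Type*} (G : SimpleGraph V) (m : ℕ) (u : Fin (m+2) → V) (d : Fin 2 → V)
    (h : (sierpinskiGraph G 2).Adj (suffW m u) d) :
    (sierpinskiGraph G (m+2)).Adj u (glueW m (fun j => u ⟨(j : ℕ), by omega⟩) d) := by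
  obtain ⟨i2, h1, h2, h3, h4⟩ := h
  have hmi : ¬ ((⟨m + (i2 : ℕ), by omega⟩ : Fin (m+2)) : ℕ) < m := by
    simp only [Fin.val_mk]; omega
  have hdi : (⟨((⟨m + (i2 : ℕ), by omega⟩ : Fin (m+2)) : ℕ) - m, by omega⟩ : Fin 2) = i2 :=
    Fin.ext (by simp only [Fin.val_mk]; omega)
  refine ⟨⟨m + (i2 : ℕ), by omega⟩, ?_, ?_, ?_, ?_⟩
  · intro j hj
    rw [Fin.lt_def] at hj
    simp only [Fin.val_mk] at hj
    by_cases hjm : (j : ℕ) < m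
    · simp only [glueW, dif_pos hjm]
    · have h0 : (⟨0, by omega⟩ : Fin 2) < i2 := by
        rw [Fin.lt_def]; simp only [Fin.val_mk]; omega
      have hh := h1 ⟨0, by omega⟩ h0
      simp only [glueW, dif_neg hjm]
      have e1 : j = (⟨m + ((⟨0, by omega⟩ : Fin 2) : ℕ), by omega⟩ : Fin (m+2)) :=
        Fin.ext (by simp only [Fin.val_mk]; omega)
      have e2 : (⟨(j : ℕ) - m, by omega⟩ : Fin 2) = ⟨0, by omega⟩ :=
        Fin.ext (by simp only [Fin.val_mk]; omega)
      rw [e2, e1]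
      exact hh
  · show u _ ≠ glueW m (fun j => u ⟨(j : ℕ), by omega⟩) d _
    simp only [glueW, dif_neg hmi, hdi]
    exact h2
  · show G.Adj (u _) (glueW m (fun j => u ⟨(j : ℕ), by omega⟩) d _)
    simp only [glueW, dif_neg hmi, hdi]
    exact h3
  · intro j hj
    rw [Fin.lt_def] at hj
    simp only [Fin.val_mk] at hj
    have hjm : ¬ ((j : ℕ) < m) := by omega
    have hj2 : i2 < (⟨(j : ℕ) - m, by omega⟩ : Fin 2) := by
      rw [Fin.lt_def]; simp only [Fin.val_mk]; omega
    have h4' := h4 ⟨(j : ℕ) - m, by omega⟩ hj2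
    have huj : suffW m u ⟨(j : ℕ) - m, by omega⟩ = u j :=
      congrArg u (Fin.ext (by simp only [Fin.val_mk]; omega))
    constructor
    · show u j = glueW m (fun j => u ⟨(j : ℕ), by omega⟩) d _
      simp only [glueW, dif_neg hmi, hdi]
      rw [← huj]
      exact h4'.1
    · show glueW m (fun j => u ⟨(j : ℕ), by omega⟩) d j = u _
      simp only [glueW, dif_neg hjm]
      exact h4'.2

lemma mem_closed_of_suff {V : Type*} (G : SimpleGraph V) (m : ℕ) (D : Set (Fin 2 → V))
    (u : Fin (m+2) → V) (h : suffW m u ∈ closedNbhd (sierpinskiGraph G 2) D) :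
    u ∈ closedNbhd (sierpinskiGraph G (m+2)) {w | suffW m w ∈ D} := by
  rcases h with h | ⟨d, hd, hadj⟩
  · exact Or.inl h
  · refine Or.inr ⟨glueW m (fun j => u ⟨(j : ℕ), by omega⟩) d, ?_, ?_⟩
    · show suffW m _ ∈ D
      rw [suff_glue]; exact hd
    · exact (adj_lift G m u d hadj.symm).symm

lemma isolating_lift {V : Type*} (G : SimpleGraph V) (m : ℕ) (D : Set (Fin 2 → V))
    (hiso : IsIsolating (sierpinskiGraph G 2) D)
    (hext : ∀ i j : V, ((fun _ => i) : Fin 2 → V) ∉ closedNbhd (sierpinskiGraph G 2) D →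
        ((fun _ => j) : Fin 2 → V) ∉ closedNbhd (sierpinskiGraph G 2) D → ¬ G.Adj i j) :
    IsIsolating (sierpinskiGraph G (m+2)) {w | suffW m w ∈ D} := by
  intro u hu v hv hadj
  rw [Set.mem_compl_iff] at hu hv
  have hsu : suffW m u ∉ closedNbhd (sierpinskiGraph G 2) D :=
    fun h => hu (mem_closed_of_suff G m D u h)
  have hsv : suffW m v ∉ closedNbhd (sierpinskiGraph G 2) D :=
    fun h => hv (mem_closed_of_suff G m D v h)
  obtain ⟨i, h1, h2, h3, h4⟩ := hadj
  by_cases him : (i : ℕ) < m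
  · -- both suffixes are extreme vertices
    have hu' : suffW m u = fun _ => v i := by
      funext k
      exact (h4 ⟨m + (k : ℕ), by omega⟩ (by rw [Fin.lt_def]; simp only [Fin.val_mk]; omega)).1
    have hv' : suffW m v = fun _ => u i := by
      funext k
      exact (h4 ⟨m + (k : ℕ), by omega⟩ (by rw [Fin.lt_def]; simp only [Fin.val_mk]; omega)).2
    exact hext (v i) (u i) (hu' ▸ hsu) (hv' ▸ hsv) h3.symm
  · -- the suffixes are adjacent in S_G^2
    have hi' : i = ⟨m + ((i : ℕ) - m), by omega⟩ := Fin.ext (by simp only [Fin.val_mk]; omega)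
    have hui : suffW m u ⟨(i : ℕ) - m, by omega⟩ = u i := by
      simp only [suffW]; exact congrArg u hi'.symm
    have hvi : suffW m v ⟨(i : ℕ) - m, by omega⟩ = v i := by
      simp only [suffW]; exact congrArg v hi'.symm
    refine hiso (suffW m u) (Set.mem_compl hsu) (suffW m v) (Set.mem_compl hsv)
      ⟨⟨(i : ℕ) - m, by omega⟩, ?_, ?_, ?_, ?_⟩
    · intro j2 hj2
      rw [Fin.lt_def] at hj2
      simp only [Fin.val_mk] at hj2
      exact h1 ⟨m + (j2 : ℕ), by omega⟩ (by rw [Fin.lt_def]; simp only [Fin.val_mk]; omega)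
    · rw [hui, hvi]; exact h2
    · rw [hui, hvi]; exact h3
    · intro j2 hj2
      rw [Fin.lt_def] at hj2
      simp only [Fin.val_mk] at hj2
      have h4' := h4 ⟨m + (j2 : ℕ), by omega⟩
        (by rw [Fin.lt_def]; simp only [Fin.val_mk]; omega)
      rw [hui, hvi]
      exact h4'

lemma ncard_suff_preimage {V : Type*} [Fintype V] (m : ℕ) (D : Set (Fin 2 → V)) :
    ({w : Fin (m+2) → V | suffW m w ∈ D}).ncard = D.ncard * Fintype.card V ^ m := by
  classical
  have e : ((Fin m → V) × D) ≃ {w : Fin (m+2) → V | suffW m w ∈ D} :=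
    { toFun := fun pd => ⟨glueW m pd.1 pd.2.1, by
        show suffW m _ ∈ D
        rw [suff_glue]; exact pd.2.2⟩
      invFun := fun w => ((fun j => w.1 ⟨(j : ℕ), by omega⟩), ⟨suffW m w.1, w.2⟩)
      left_inv := by
        rintro ⟨p, d, hd⟩
        refine Prod.ext ?_ (Subtype.ext ?_)
        · funext j
          simp only [glueW, dif_pos j.isLt]
        · exact suff_glue m p d
      right_inv := by
        rintro ⟨w, hw⟩
        exact Subtype.ext (glue_suff m w) }
  calc ({w : Fin (m+2) → V | suffW m w ∈ D}).ncard
      = Nat.card {w : Fin (m+2) → V | suffW m w ∈ D} := (Nat.card_coe_set_eq _).symm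
    _ = Nat.card ((Fin m → V) × D) := (Nat.card_congr e).symm
    _ = Nat.card (Fin m → V) * Nat.card D := Nat.card_prod _ _
    _ = Fintype.card V ^ m * D.ncard := by
        rw [Nat.card_eq_fintype_card, Nat.card_coe_set_eq]
        congr 1
        simp [Fintype.card_fun]
    _ = D.ncard * Fintype.card V ^ m := Nat.mul_comm _ _

/-- For `t ≥ 2`, `ι(S_G^t) ≤ ξ(S_G²) · n(G)^{t−2}`. -/
theorem isolation_sierpinski_le_xi_mul
    {V : Type*} [Fintype V] (G : SimpleGraph V) (t : ℕ) (ht : 2 ≤ t) :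
    isolationNum (sierpinskiGraph G t) ≤ xiNum G * Fintype.card V ^ (t - 2) := by
  obtain ⟨m, rfl⟩ : ∃ m, t = m + 2 := ⟨t - 2, by omega⟩
  have hm : m + 2 - 2 = m := by omega
  rw [hm]
  -- a minimum dominating set of S_G^2 exists
  have hdomuniv : IsDominating (sierpinskiGraph G 2) Set.univ :=
    Set.eq_univ_iff_forall.mpr fun v => Or.inl trivial
  have hγ : dominationNum (sierpinskiGraph G 2) ∈
      {n | ∃ D : Set (Fin 2 → V), IsDominating (sierpinskiGraph G 2) D ∧ D.ncard = n} :=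
    Nat.sInf_mem ⟨(Set.univ : Set (Fin 2 → V)).ncard, Set.univ, hdomuniv, rfl⟩
  obtain ⟨D₀, hD₀dom, hD₀card⟩ := hγ
  -- xi set is nonempty
  have hiso₀ : IsIsolating (sierpinskiGraph G 2) D₀ := by
    intro u hu
    rw [Set.mem_compl_iff, hD₀dom] at hu
    exact absurd trivial hu
  have hext₀ : ∀ i j : V, ((fun _ => i) : Fin 2 → V) ∉ closedNbhd (sierpinskiGraph G 2) D₀ →
      ((fun _ => j) : Fin 2 → V) ∉ closedNbhd (sierpinskiGraph G 2) D₀ → ¬ G.Adj i j := by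
    intro i j hi _
    rw [hD₀dom] at hi
    exact absurd trivial hi
  have hne : {n | ∃ D : Set (Fin 2 → V), IsIsolating (sierpinskiGraph G 2) D ∧
      D.ncard ≤ dominationNum (sierpinskiGraph G 2) ∧
      (∀ i j : V, ((fun _ => i) : Fin 2 → V) ∉ closedNbhd (sierpinskiGraph G 2) D →
        ((fun _ => j) : Fin 2 → V) ∉ closedNbhd (sierpinskiGraph G 2) D → ¬ G.Adj i j) ∧
      D.ncard = n}.Nonempty :=
    ⟨D₀.ncard, D₀, hiso₀, le_of_eq hD₀card, hext₀, rfl⟩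
  obtain ⟨D, hDiso, -, hDext, hDcard⟩ := Nat.sInf_mem hne
  calc isolationNum (sierpinskiGraph G (m + 2))
      ≤ ({w : Fin (m+2) → V | suffW m w ∈ D}).ncard :=
        Nat.sInf_le ⟨_, isolating_lift G m D hDiso hDext, rfl⟩
    _ = D.ncard * Fintype.card V ^ m := ncard_suff_preimage m D
    _ = xiNum G * Fintype.card V ^ m := by rw [hDcard]; rfl
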